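/- arXiv:1110.2701 — 4 statements merged into one kernel-verified Lean document; each statement's English description precedes it below -/
import Mathlib

section
/- For Z-segments Δ = (a, b) and Δ' = (a', b'), the following are equivalent: (i) from the concatenation of the list (a, a+1, …, b) followed by the list (a', a'+1, …, b') one can extract a sublist which is a list of consecutive integers (each term equal to the previous one plus 1) of length strictly greater than both b − a + 1 and b' − a' + 1; (ii) a < a', a' ≤ b + 1 and b < b'. (This identifies the paper's Definition 3.2 of 'Δ precedes Δ'' with its arithmetic characterization on an infinite cuspidal line.) -/
/-- The list `(a, a+1, …, b)` of consecutive integers associated to a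
Z-segment `(a, b)`. -/
def zlist (a b : ℤ) : List ℤ :=
  (List.range (b - a + 1).toNat).map fun k => a + k

lemma flatMap_single {α β : Type} (l : List α) (f : α → β) :
    (l.flatMap fun a => [f a]) = l.map f := by
  induction l <;> simp_all

lemma zlist_eq (a b : ℤ) :
    zlist a b = (List.range (b - a + 1).toNat).map (fun k : ℕ => a + (k : ℤ)) := by
  simp [zlist, flatMap_single, List.map_map, Function.comp]

lemma zlist_length (a b : ℤ) : (zlist a b).length = (b - a + 1).toNat := by
  simp [zlist_eq]

lemma mem_zlist {a b z : ℤ} (h : z ∈ zlist a b) : a ≤ z ∧ z ≤ b := by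
  rw [zlist_eq] at h
  simp only [List.mem_map, List.mem_range] at h
  obtain ⟨k, hk, rfl⟩ := h
  omega

lemma zlist_chain' (a b : ℤ) : (zlist a b).Chain' (fun x y => y = x + 1) := by
  unfold List.Chain'
  rw [zlist_eq, List.isChain_iff_getElem]
  intro i hi
  simp only [List.length_map, List.length_range] at hi
  simp only [List.get_eq_getElem, List.getElem_map, List.getElem_range]
  push_cast
  ring

lemma zlist_append {a c b : ℤ} (h1 : a ≤ c + 1) (h2 : c ≤ b) :
    zlist a c ++ zlist (c + 1) b = zlist a b := by
  have hN : (b - a + 1).toNat = (c - a + 1).toNat + (b - (c+1) + 1).toNat := by omega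
  rw [zlist_eq a b, hN, List.range_add, List.map_append, zlist_eq, zlist_eq, List.map_map]
  congr 1
  apply List.map_congr_left
  intro k hk
  simp only [Function.comp]
  have : ((c - a + 1).toNat : ℤ) = c - a + 1 := by omega
  push_cast [this]
  ring

lemma chain'_getLast : ∀ (s : List ℤ) (h : s ≠ []),
    s.Chain' (fun x y => y = x + 1) →
    s.getLast h = s.head h + (s.length : ℤ) - 1 := by
  intro s
  induction s with
  | nil => simp
  | cons x t ih =>
    intro h hc
    cases t with
    | nil => simp
    | cons y u =>
      unfold List.Chain' at hc
      rw [List.isChain_cons_cons] at hc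
      have := ih (by simp) hc.2
      rw [List.getLast_cons (by simp), this]
      simp only [List.head_cons, hc.1, List.length_cons]
      push_cast
      ring


/-- For Z-segments `Δ = (a, b)` and `Δ' = (a', b')`, one can
extract from the concatenation of the list of `Δ` followed by the list of `Δ'`
a sublist of consecutive integers of length strictly greater than the lengths
of both segments if and only if `a < a'`, `a' ≤ b + 1` and `b < b'`. -/
theorem zprecedes_iff (a b a' b' : ℤ) (hab : a ≤ b) (hab' : a' ≤ b') :
    (∃ s : List ℤ, s.Sublist (zlist a b ++ zlist a' b') ∧
      s.Chain' (fun x y => y = x + 1) ∧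
      (b - a + 1 : ℤ) < s.length ∧ (b' - a' + 1 : ℤ) < s.length) ↔
    (a < a' ∧ a' ≤ b + 1 ∧ b < b') := by
  constructor
  · rintro ⟨s, hsub, hch, h1, h2⟩
    rw [List.sublist_append_iff] at hsub
    obtain ⟨s1, s2, rfl, h1s, h2s⟩ := hsub
    have hl1 : s1.length ≤ (b - a + 1).toNat := by
      simpa [zlist_length] using h1s.length_le
    have hl2 : s2.length ≤ (b' - a' + 1).toNat := by
      simpa [zlist_length] using h2s.length_le
    have hlen : (s1 ++ s2).length = s1.length + s2.length := by simp
    have hne1 : s1 ≠ [] := by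
      rintro rfl
      simp at h2
      omega
    have hne2 : s2 ≠ [] := by
      rintro rfl
      simp at h1
      omega
    obtain ⟨hc1, hc2, hjun⟩ := List.isChain_append.mp hch
    set x := s1.getLast hne1 with hx
    set y := s2.head hne2 with hy
    have hyx : y = x + 1 := by
      apply hjun
      · rw [List.getLast?_eq_getLast hne1]; rfl
      · rw [List.head?_eq_head hne2]; rfl
    have hxm : a ≤ x ∧ x ≤ b := mem_zlist (h1s.subset (s1.getLast_mem hne1))
    have hym : a' ≤ y ∧ y ≤ b' := mem_zlist (h2s.subset (s2.head_mem hne2))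
    have hh1 : a ≤ s1.head hne1 ∧ s1.head hne1 ≤ b :=
      mem_zlist (h1s.subset (s1.head_mem hne1))
    have hg2 : a' ≤ s2.getLast hne2 ∧ s2.getLast hne2 ≤ b' :=
      mem_zlist (h2s.subset (s2.getLast_mem hne2))
    have e1 : x = s1.head hne1 + (s1.length : ℤ) - 1 := chain'_getLast s1 hne1 hc1
    have e2 : s2.getLast hne2 = y + (s2.length : ℤ) - 1 := chain'_getLast s2 hne2 hc2
    rw [hlen] at h1 h2
    push_cast at h1 h2
    omega
  · rintro ⟨h1, h2, h3⟩
    refine ⟨zlist a b', ?_, zlist_chain' _ _, ?_, ?_⟩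
    · have : a' - 1 + 1 = a' := by ring
      rw [← zlist_append (c := a' - 1) (by omega) (by omega), this]
      apply List.Sublist.append _ (List.Sublist.refl _)
      rw [zlist_eq, zlist_eq]
      exact (List.range_sublist.mpr (by omega)).map _
    · rw [zlist_length]; omega
    · rw [zlist_length]; omega
end

section
/- Let e ≥ 2 and let (a, b), (a', b') be pairs of integers with 0 ≤ a ≤ b ≤ e − 2 and 0 ≤ a' ≤ b' ≤ e − 2. Let Δ̄ and Δ̄' be the mod-e segments (a mod e, b − a + 1) and (a' mod e, b' − a' + 1). Then Δ̄ precedes Δ̄' if and only if a < a', a' ≤ b + 1 and b < b'. (This is the combinatorial core of §6.2.4 of the paper: for segments whose endpoints lie in a window of size e − 1, precedence modulo e coincides with precedence over Z.) -/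
/-- The list `(a, a+1, …, a+l−1)` of classes of the mod-`e` segment `(a, l)`. -/
def mlist (e : ℕ) (a : ZMod e) (l : ℕ) : List (ZMod e) :=
  (List.range l).map fun k => a + (k : ZMod e)

/-- A mod-`e` segment `Δ` precedes `Δ'` if some sublist of the concatenation of
the list of `Δ` followed by the list of `Δ'` is a run of length strictly
greater than the lengths of both segments. -/
def mprec (e : ℕ) (Δ Δ' : ZMod e × ℕ) : Prop :=
  ∃ s : List (ZMod e), s.Sublist (mlist e Δ.1 Δ.2 ++ mlist e Δ'.1 Δ'.2) ∧
    s.Chain' (fun x y => y = x + 1) ∧ Δ.2 < s.length ∧ Δ'.2 < s.length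

lemma mlist_eq (e : ℕ) (a : ZMod e) (l : ℕ) :
    mlist e a l = (List.range l).map (fun k : ℕ => a + ((k : ℕ) : ZMod e)) := by
  unfold mlist
  rw [show (do let a ← List.range l; pure ((a : ℕ) : ZMod e) : List (ZMod e)) =
      (List.range l).map (fun k : ℕ => ((k : ℕ) : ZMod e)) from
      List.map_eq_flatMap.symm, List.map_map]
  rfl

lemma mlist_zero (e : ℕ) (c : ZMod e) : mlist e c 0 = [] := by
  rw [mlist_eq, List.range_zero, List.map_nil]

lemma mlist_length (e : ℕ) (c : ZMod e) (l : ℕ) : (mlist e c l).length = l := by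
  rw [mlist_eq, List.length_map, List.length_range]

lemma mlist_cons (e : ℕ) (c : ZMod e) (l : ℕ) :
    mlist e c (l + 1) = c :: mlist e (c + 1) l := by
  rw [mlist_eq, mlist_eq, List.range_succ_eq_map, List.map_cons, List.map_map]
  congr 1
  · norm_num
  · apply List.map_congr_left
    intro k _
    simp only [Function.comp_apply]
    push_cast
    ring

lemma mlist_concat (e : ℕ) (c : ZMod e) (l : ℕ) :
    mlist e c (l + 1) = mlist e c l ++ [c + (l : ZMod e)] := by
  rw [mlist_eq, mlist_eq, List.range_succ, List.map_append, List.map_cons, List.map_nil]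

lemma mlist_append (e : ℕ) (c : ZMod e) (m n : ℕ) :
    mlist e c (m + n) = mlist e c m ++ mlist e (c + (m : ZMod e)) n := by
  rw [mlist_eq, mlist_eq, mlist_eq, List.range_add, List.map_append, List.map_map]
  congr 1
  apply List.map_congr_left
  intro k _
  simp only [Function.comp_apply]
  push_cast
  ring

lemma mlist_head? (e : ℕ) (c : ZMod e) (l : ℕ) :
    (mlist e c (l + 1)).head? = some c := by
  rw [mlist_cons]; rfl

lemma mlist_getLast? (e : ℕ) (c : ZMod e) (l : ℕ) :
    (mlist e c (l + 1)).getLast? = some (c + (l : ZMod e)) := by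
  rw [mlist_concat]; exact List.getLast?_concat

lemma mlist_chain' (e : ℕ) (c : ZMod e) (l : ℕ) :
    (mlist e c l).Chain' (fun x y => y = x + 1) := by
  induction l generalizing c with
  | zero => rw [mlist_zero]; exact List.isChain_nil
  | succ n ih =>
    rw [mlist_cons, List.Chain', List.isChain_cons]
    refine ⟨?_, ih (c + 1)⟩
    intro h hh
    rcases n with _ | m
    · rw [mlist_zero] at hh; simp at hh
    · rw [mlist_head?] at hh
      rw [Option.mem_def, Option.some_inj] at hh
      subst hh
      rfl

/-- A run which is a sublist of `mlist e c l` (with `l ≤ e`) is a contiguous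
block of it. -/
lemma run_sublist_mlist (e : ℕ) [NeZero e] (c : ZMod e) :
    ∀ (l : ℕ), l ≤ e → ∀ s : List (ZMod e), s.Sublist (mlist e c l) →
      s.Chain' (fun x y => y = x + 1) →
      ∃ i : ℕ, i + s.length ≤ l ∧ s = mlist e (c + (i : ZMod e)) s.length := by
  intro l
  induction l generalizing c with
  | zero =>
    intro _ s hs _
    rw [mlist_zero, List.sublist_nil] at hs
    subst hs
    exact ⟨0, by simp, by rw [List.length_nil, mlist_zero]⟩
  | succ n ih =>
    intro hle s hs hch
    rw [mlist_cons] at hs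
    cases hs with
    | cons _ h =>
      obtain ⟨i, hi, hs⟩ := ih (c + 1) (by omega) s h hch
      refine ⟨i + 1, by omega, ?_⟩
      rw [hs, mlist_length]
      congr 1
      push_cast
      ring
    | cons_cons _ h =>
      rename_i t
      have hcht : t.Chain' (fun x y => y = x + 1) := hch.tail
      obtain ⟨i, hi, ht⟩ := ih (c + 1) (by omega) t h hcht
      rcases ht_len : t.length with _ | k
      · have : t = [] := List.length_eq_zero_iff.mp ht_len
        subst this
        refine ⟨0, by simp only [List.length_cons, List.length_nil]; omega, ?_⟩
        rw [List.length_cons, List.length_nil, Nat.cast_zero, add_zero, mlist_cons, mlist_zero]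
      · -- t is nonempty; the chain condition forces i = 0
        rw [ht_len] at ht hi
        have hhead : t.head? = some (c + 1 + (i : ZMod e)) := by
          rw [ht, mlist_head?]
        have hrel : ∀ y ∈ t.head?, y = c + 1 := by
          rw [List.Chain', List.isChain_cons] at hch
          intro y hy
          exact hch.1 y hy
        have h0 : c + 1 + (i : ZMod e) = c + 1 := hrel _ hhead
        have hizero : (i : ZMod e) = 0 := by
          have := h0
          linear_combination this
        have hie : e ∣ i := (ZMod.natCast_eq_zero_iff i e).mp hizero
        have hieq : i = 0 := Nat.eq_zero_of_dvd_of_lt hie (by omega)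
        subst hieq
        simp only [Nat.cast_zero, add_zero] at ht
        refine ⟨0, by simp only [List.length_cons]; omega, ?_⟩
        simp only [Nat.cast_zero, add_zero, List.length_cons, ht_len]
        rw [mlist_cons]
        rw [ht]

lemma cast_toNat_zmod (e : ℕ) (x : ℤ) (hx : 0 ≤ x) :
    ((x.toNat : ℕ) : ZMod e) = ((x : ℤ) : ZMod e) := by
  rw [← Int.cast_natCast, Int.toNat_of_nonneg hx]

lemma mlist_sublist_of_le (e : ℕ) (c : ZMod e) (d m n : ℕ) (h : d + m ≤ n) :
    (mlist e (c + (d : ZMod e)) m).Sublist (mlist e c n) := by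
  have hn : n = d + (m + (n - d - m)) := by omega
  rw [hn, mlist_append, mlist_append]
  exact (List.sublist_append_left _ _).trans (List.sublist_append_right _ _)

/-- For segments whose endpoints lie in the window
`{0, …, e − 2}`, precedence of the reductions modulo `e` coincides with the
arithmetic precedence over `ℤ`. -/
theorem mprec_iff_of_window (e : ℕ) (he : 2 ≤ e) (a b a' b' : ℤ)
    (ha : 0 ≤ a) (hab : a ≤ b) (hb : b ≤ (e : ℤ) - 2)
    (ha' : 0 ≤ a') (hab' : a' ≤ b') (hb' : b' ≤ (e : ℤ) - 2) :
    mprec e ((a : ZMod e), (b - a + 1).toNat) ((a' : ZMod e), (b' - a' + 1).toNat) ↔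
      (a < a' ∧ a' ≤ b + 1 ∧ b < b') := by
  have hNe : NeZero e := ⟨by omega⟩
  constructor
  · rintro ⟨s, hsub, hch, hlen1, hlen2⟩
    simp only at hsub hch hlen1 hlen2
    obtain ⟨s1, s2, rfl, h1, h2⟩ := List.sublist_append_iff.mp hsub
    have hk1le : s1.length ≤ (b - a + 1).toNat := by
      have := h1.length_le; rwa [mlist_length] at this
    have hk2le : s2.length ≤ (b' - a' + 1).toNat := by
      have := h2.length_le; rwa [mlist_length] at this
    have hslen : (s1 ++ s2).length = s1.length + s2.length := List.length_append
    rw [hslen] at hlen1 hlen2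
    have hk1 : 1 ≤ s1.length := by omega
    have hk2 : 1 ≤ s2.length := by omega
    rw [List.Chain', List.isChain_append] at hch
    obtain ⟨hc1, hc2, hjun⟩ := hch
    obtain ⟨i, hi, hs1⟩ := run_sublist_mlist e ((a : ZMod e)) _ (by omega) s1 h1 hc1
    obtain ⟨j, hj, hs2⟩ := run_sublist_mlist e ((a' : ZMod e)) _ (by omega) s2 h2 hc2
    obtain ⟨m1, hm1⟩ : ∃ m, s1.length = m + 1 := ⟨s1.length - 1, by omega⟩
    obtain ⟨m2, hm2⟩ : ∃ m, s2.length = m + 1 := ⟨s2.length - 1, by omega⟩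
    have hlast : s1.getLast? = some ((a : ZMod e) + (i : ZMod e) + (m1 : ZMod e)) := by
      rw [hs1, hm1, mlist_getLast?]
    have hhead : s2.head? = some ((a' : ZMod e) + (j : ZMod e)) := by
      rw [hs2, hm2, mlist_head?]
    have hx : (a' : ZMod e) + (j : ZMod e) =
        (a : ZMod e) + (i : ZMod e) + (m1 : ZMod e) + 1 := hjun _ hlast _ hhead
    -- convert the junction relation to an equality of natural numbers
    have key : ((a'.toNat + j : ℕ) : ZMod e) = ((a.toNat + i + m1 + 1 : ℕ) : ZMod e) := by
      push_cast
      rw [cast_toNat_zmod e a' ha', cast_toNat_zmod e a ha]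
      linear_combination hx
    have hb1 : a'.toNat + j < e := by omega
    have hb2 : a.toNat + i + m1 + 1 < e := by omega
    have hnat : a'.toNat + j = a.toNat + i + m1 + 1 := by
      rw [← ZMod.val_cast_of_lt hb1, ← ZMod.val_cast_of_lt hb2, key]
    omega
  · rintro ⟨h1, h2, h3⟩
    refine ⟨mlist e (a : ZMod e) (b' - a + 1).toNat, ?_, mlist_chain' e _ _, ?_, ?_⟩
    · simp only
      have hdecomp : (b' - a + 1).toNat = (b - a + 1).toNat + (b' - b).toNat := by omega
      rw [hdecomp, mlist_append]
      refine List.Sublist.append (List.Sublist.refl _) ?_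
      have hstart : (a : ZMod e) + (((b - a + 1).toNat : ℕ) : ZMod e) =
          (a' : ZMod e) + (((b + 1 - a').toNat : ℕ) : ZMod e) := by
        rw [cast_toNat_zmod e _ (by omega), cast_toNat_zmod e _ (by omega)]
        push_cast
        ring
      rw [hstart]
      exact mlist_sublist_of_le e _ _ _ _ (by omega)
    · simp only [mlist_length]; omega
    · simp only [mlist_length]; omega
end

section
/- Let e ≥ 1 and let m be a nonempty banal finite multiset of mod-e segments. Then m admits an enumeration (Δ_1, …, Δ_r) together with a partition of the index set {1, …, r} into consecutive blocks I_1, …, I_u (in this order) such that: (i) any two segments whose indices lie in the same block I_k have the same final class, denoted c_k; (ii) for all indices i < j, Δ_i does not precede Δ_j; (iii) for all k < k' and every index j ∈ I_{k'}, the class c_k does not belong to the support of Δ_j. (This is the combinatorial arrangement (5.1)–(5.3) constructed in §5.3 of the paper.) -/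
/-- The final class `a + l − 1` of the mod-`e` segment `(a, l)`. -/
def finalClass (e : ℕ) (Δ : ZMod e × ℕ) : ZMod e := Δ.1 + ((Δ.2 - 1 : ℕ) : ZMod e)

namespace ArrAux

/-- Value of a class relative to the avoided class `c`. -/
def kval (e : ℕ) (c x : ZMod e) : ℕ := (x - c).val

/-- The key of a segment: value of its final class. -/
def key (e : ℕ) (c : ZMod e) (Δ : ZMod e × ℕ) : ℕ := kval e c (finalClass e Δ)

lemma mem_mlist {e : ℕ} {a : ZMod e} {l : ℕ} {x : ZMod e} :
    x ∈ mlist e a l ↔ ∃ k < l, x = a + (k : ZMod e) := by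
  simp only [mlist]
  constructor
  · intro h
    obtain ⟨y, hy, rfl⟩ := List.mem_map.mp h
    simp at hy
    obtain ⟨k, hk, rfl⟩ := hy
    exact ⟨k, hk, rfl⟩
  · rintro ⟨k, hk, rfl⟩
    apply List.mem_map.mpr
    refine ⟨(k : ZMod e), ?_, rfl⟩
    simp
    exact ⟨k, hk, rfl⟩

lemma kval_lt {e : ℕ} (he : 1 ≤ e) (c x : ZMod e) : kval e c x < e := by
  haveI : NeZero e := ⟨by omega⟩
  exact ZMod.val_lt _

lemma kval_step {e : ℕ} (he : 2 ≤ e) (c x : ZMod e) (hx : x + 1 ≠ c) :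
    kval e c (x + 1) = kval e c x + 1 := by
  haveI : NeZero e := ⟨by omega⟩
  have hv : (x - c).val < e := ZMod.val_lt _
  have hrepr : ((x - c).val : ZMod e) = x - c := by
    rw [ZMod.natCast_val, ZMod.cast_id]
  by_cases hne : (x - c).val = e - 1
  · exfalso
    apply hx
    have h1 : x - c = ((e - 1 : ℕ) : ZMod e) := by rw [← hne, hrepr]
    have h2 : x + 1 - c = ((e - 1 : ℕ) : ZMod e) + 1 := by
      rw [← h1]; ring
    have h3 : ((e - 1 : ℕ) : ZMod e) + 1 = 0 := by
      calc ((e - 1 : ℕ) : ZMod e) + 1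
          = ((e - 1 : ℕ) : ZMod e) + ((1 : ℕ) : ZMod e) := by norm_num
        _ = (((e - 1) + 1 : ℕ) : ZMod e) := by rw [Nat.cast_add]
        _ = ((e : ℕ) : ZMod e) := by congr 1; omega
        _ = 0 := ZMod.natCast_self e
    have h4 : x + 1 - c = 0 := by rw [h2, h3]
    linear_combination h4
  · have hlt : (x - c).val + 1 < e := by omega
    have h5 : x + 1 - c = (((x - c).val + 1 : ℕ) : ZMod e) := by
      push_cast
      rw [hrepr]; ring
    unfold kval
    rw [h5, ZMod.val_cast_of_lt hlt]

lemma kval_mlist {e : ℕ} (he : 2 ≤ e) (c a : ZMod e) (l : ℕ)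
    (hc : c ∉ mlist e a l) : ∀ k < l, kval e c (a + (k : ZMod e)) = kval e c a + k := by
  intro k
  induction k with
  | zero => intro _; simp
  | succ k ih =>
    intro hk
    have hk' : k < l := by omega
    have h1 : a + ((k : ℕ) : ZMod e) + 1 ≠ c := by
      intro h
      apply hc
      rw [mem_mlist]
      exact ⟨k + 1, hk, by rw [← h]; push_cast; ring⟩
    have h2 : a + (((k + 1 : ℕ)) : ZMod e) = (a + ((k : ℕ) : ZMod e)) + 1 := by
      push_cast; ring
    rw [h2, kval_step he c _ h1, ih hk']
    omega


lemma chain_val {e : ℕ} (he : 2 ≤ e) (c : ZMod e) :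
    ∀ (s : List (ZMod e)) (x : ZMod e), (x :: s).Chain' (fun a b => b = a + 1) →
      (∀ y ∈ x :: s, y ≠ c) →
      kval e c ((x :: s).getLast (by simp)) + 1 = kval e c x + (x :: s).length := by
  intro s
  induction s with
  | nil => intro x _ _; simp [List.getLast]
  | cons z t ih =>
    intro x hch hmem
    have hz : z = x + 1 := (List.isChain_cons_cons.mp hch).1
    have hzc : z ≠ c := hmem z (by simp)
    have h1 : kval e c z = kval e c x + 1 := by
      subst hz
      exact kval_step he c x hzc
    have h2 := ih z (List.isChain_cons_cons.mp hch).2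
      (fun y hy => hmem y (List.mem_cons_of_mem x hy))
    have h3 : (x :: z :: t).getLast (by simp) = (z :: t).getLast (by simp) :=
      List.getLast_cons (by simp)
    rw [h3, h2, h1]
    simp only [List.length_cons]
    omega

lemma chain_val' {e : ℕ} (he : 2 ≤ e) (c : ZMod e) (s : List (ZMod e))
    (hch : s.Chain' (fun a b => b = a + 1)) (hmem : ∀ y ∈ s, y ≠ c) (hs : s ≠ []) :
    kval e c (s.getLast hs) + 1 = kval e c (s.head hs) + s.length := by
  obtain ⟨x, st, rfl⟩ := List.exists_cons_of_ne_nil hs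
  exact chain_val he c st x hch hmem

/-- Key lemma: if `key Δ' ≤ key Δ` then `Δ` does not precede `Δ'`. -/
lemma not_mprec {e : ℕ} (he : 2 ≤ e) (c : ZMod e) (Δ Δ' : ZMod e × ℕ)
    (hΔ : c ∉ mlist e Δ.1 Δ.2) (hΔ' : c ∉ mlist e Δ'.1 Δ'.2)
    (hl : 1 ≤ Δ.2) (hl' : 1 ≤ Δ'.2)
    (hkey : key e c Δ' ≤ key e c Δ) : ¬ mprec e Δ Δ' := by
  rintro ⟨s, hsub, hchain, hlen, hlen'⟩
  obtain ⟨a, l⟩ := Δ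
  obtain ⟨b, l'⟩ := Δ'
  simp only at hΔ hΔ' hl hl' hsub hlen hlen'
  have hkeyA : key e c (a, l) = kval e c a + (l - 1) := by
    unfold key finalClass
    exact kval_mlist he c a l hΔ (l - 1) (by omega)
  have hkeyB : key e c (b, l') = kval e c b + (l' - 1) := by
    unfold key finalClass
    exact kval_mlist he c b l' hΔ' (l' - 1) (by omega)
  rw [hkeyA, hkeyB] at hkey
  have hsc : ∀ y ∈ s, y ≠ c := by
    intro y hy hyc
    subst hyc
    rcases List.mem_append.mp (hsub.subset hy) with h | h
    · exact hΔ h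
    · exact hΔ' h
  have hmemA : ∀ y ∈ mlist e a l, ∃ k < l, kval e c y = kval e c a + k := by
    intro y hy
    obtain ⟨k, hk, rfl⟩ := mem_mlist.mp hy
    exact ⟨k, hk, kval_mlist he c a l hΔ k hk⟩
  have hmemB : ∀ y ∈ mlist e b l', ∃ k < l', kval e c y = kval e c b + k := by
    intro y hy
    obtain ⟨k, hk, rfl⟩ := mem_mlist.mp hy
    exact ⟨k, hk, kval_mlist he c b l' hΔ' k hk⟩
  obtain ⟨s1, s2, hs12, hsub1, hsub2⟩ := List.sublist_append_iff.mp hsub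
  subst hs12
  have hns : s1 ++ s2 ≠ [] := by
    intro h
    rw [h] at hlen
    simp at hlen
  have hval := chain_val' he c (s1 ++ s2) hchain hsc hns
  rcases eq_or_ne s1 [] with h1 | h1
  · subst h1
    simp only [List.nil_append] at hval hns hlen hlen' ⊢
    have hhd : (s2.head hns) ∈ mlist e b l' := hsub2.subset (List.head_mem hns)
    have hlast : (s2.getLast hns) ∈ mlist e b l' := hsub2.subset (List.getLast_mem hns)
    obtain ⟨k1, hk1, hv1⟩ := hmemB _ hhd
    obtain ⟨k2, hk2, hv2⟩ := hmemB _ hlast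
    rw [hv1, hv2] at hval
    omega
  rcases eq_or_ne s2 [] with h2 | h2
  · subst h2
    simp only [List.append_nil] at hval hns hlen hlen' ⊢
    have hhd : (s1.head hns) ∈ mlist e a l := hsub1.subset (List.head_mem hns)
    have hlast : (s1.getLast hns) ∈ mlist e a l := hsub1.subset (List.getLast_mem hns)
    obtain ⟨k1, hk1, hv1⟩ := hmemA _ hhd
    obtain ⟨k2, hk2, hv2⟩ := hmemA _ hlast
    rw [hv1, hv2] at hval
    omega
  · have hhd : ((s1 ++ s2).head hns) ∈ mlist e a l := by
      rw [List.head_append_left h1]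
      exact hsub1.subset (List.head_mem h1)
    have hlast : ((s1 ++ s2).getLast hns) ∈ mlist e b l' := by
      rw [List.getLast_append_right h2]
      exact hsub2.subset (List.getLast_mem h2)
    obtain ⟨k1, hk1, hv1⟩ := hmemA _ hhd
    obtain ⟨k2, hk2, hv2⟩ := hmemB _ hlast
    rw [hv1, hv2] at hval
    rw [List.length_append] at hval hlen hlen'
    omega

/-- Grouping a list of keyed elements into blocks of constant, strictly
decreasing key. -/
lemma group_exists {α : Type*} (f : α → ℕ) :
    ∀ (n : ℕ) (L : List α), L.length ≤ n →
    ∃ Bs : List (ℕ × List α),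
      ((Bs.map Prod.snd).flatten.Perm L) ∧
      (∀ p ∈ Bs, p.2 ≠ []) ∧
      (∀ p ∈ Bs, ∀ x ∈ p.2, f x = p.1) ∧
      Bs.Pairwise (fun p q => q.1 < p.1) := by
  intro n
  induction n with
  | zero =>
    intro L hL
    have : L = [] := List.length_eq_zero_iff.mp (by omega)
    subst this
    exact ⟨[], by simp, by simp, by simp, by simp⟩
  | succ n ih =>
    intro L hL
    rcases eq_or_ne L [] with rfl | hne
    · exact ⟨[], by simp, by simp, by simp, by simp⟩
    obtain ⟨x0, hx0⟩ : ∃ x0, x0 ∈ List.argmax f L := by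
      cases h : List.argmax f L with
      | none => exact absurd (List.argmax_eq_none.mp h) hne
      | some a => exact ⟨a, by simp [h]⟩
    have hx0L : x0 ∈ L := List.argmax_mem hx0
    have hmax : ∀ y ∈ L, f y ≤ f x0 := fun y hy => List.le_of_mem_argmax hy hx0
    classical
    set p := L.filter (fun y => decide (f y = f x0)) with hp
    set q := L.filter (fun y => !decide (f y = f x0)) with hq
    have hperm : (p ++ q).Perm L := List.filter_append_perm _ L
    have hx0p : x0 ∈ p := by
      rw [hp, List.mem_filter]
      exact ⟨hx0L, by simp⟩
    have hplen : 1 ≤ p.length := List.length_pos_iff.mpr (List.ne_nil_of_mem hx0p)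
    have hlen : p.length + q.length = L.length := by
      have := hperm.length_eq
      simpa using this
    obtain ⟨Bs, hBperm, hBne, hBconst, hBpair⟩ := ih q (by omega)
    have hqsub : ∀ y ∈ q, f y < f x0 := by
      intro y hy
      rw [hq, List.mem_filter] at hy
      have h1 := hmax y hy.1
      have h2 : ¬ (f y = f x0) := by simpa using hy.2
      omega
    have hBkey : ∀ B ∈ Bs, B.1 < f x0 := by
      intro B hB
      obtain ⟨y, hy⟩ := List.exists_mem_of_ne_nil _ (hBne B hB)
      have hyq : y ∈ q := by
        apply hBperm.mem_iff.mp
        exact List.mem_flatten.mpr ⟨B.2, List.mem_map_of_mem (f := Prod.snd) hB, hy⟩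
      have := hBconst B hB y hy
      have := hqsub y hyq
      omega
    refine ⟨(f x0, p) :: Bs, ?_, ?_, ?_, ?_⟩
    · simp only [List.map_cons, List.flatten_cons]
      exact ((hBperm.append_left p).trans hperm)
    · intro P hP
      rcases List.mem_cons.mp hP with rfl | hP'
      · exact List.ne_nil_of_mem hx0p
      · exact hBne P hP'
    · intro P hP y hy
      rcases List.mem_cons.mp hP with rfl | hP'
      · rw [hp, List.mem_filter] at hy
        simpa using hy.2
      · exact hBconst P hP' y hy
    · rw [List.pairwise_cons]
      exact ⟨fun B hB => hBkey B hB, hBpair⟩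

end ArrAux

/-- Every nonempty banal finite multiset of mod-`e` segments
admits an enumeration partitioned into consecutive blocks, each block carrying
a common final class `c_k`, such that no earlier segment precedes a later one,
and for `k < k'` the class `c_k` lies in the support of no segment of the
block `I_{k'}` (the arrangement (5.1)–(5.3) of the paper). Each block is
recorded as a pair `(c_k, I_k)`. -/
theorem exists_arranged_blocks (e : ℕ) (he : 1 ≤ e) (m : Multiset (ZMod e × ℕ))
    (hm : m ≠ 0) (hpos : ∀ Δ ∈ m, 1 ≤ Δ.2)
    (hban : ∃ c : ZMod e, ∀ Δ ∈ m, c ∉ mlist e Δ.1 Δ.2) :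
    ∃ Ls : List (ZMod e × List (ZMod e × ℕ)),
      (((Ls.map Prod.snd).flatten : List (ZMod e × ℕ)) : Multiset (ZMod e × ℕ)) = m ∧
      (∀ p ∈ Ls, p.2 ≠ []) ∧
      (∀ p ∈ Ls, ∀ Δ ∈ p.2, finalClass e Δ = p.1) ∧
      ((Ls.map Prod.snd).flatten.Pairwise fun Δ Δ' => ¬ mprec e Δ Δ') ∧
      Ls.Pairwise (fun p p' => ∀ Δ ∈ p'.2, p.1 ∉ mlist e Δ.1 Δ.2) := by
  classical
  obtain ⟨c, hc⟩ := hban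
  obtain ⟨Δ₀, hΔ₀⟩ := Multiset.exists_mem_of_ne_zero hm
  have he2 : 2 ≤ e := by
    by_contra h
    have he1 : e = 1 := by omega
    subst he1
    apply hc Δ₀ hΔ₀
    have hmem : Δ₀.1 ∈ mlist 1 Δ₀.1 Δ₀.2 :=
      ArrAux.mem_mlist.mpr ⟨0, hpos Δ₀ hΔ₀, by simp⟩
    have hceq : c = Δ₀.1 := Subsingleton.elim _ _
    rw [hceq]; exact hmem
  haveI : NeZero e := ⟨by omega⟩
  set L := m.toList with hLdef
  have hLm : ∀ Δ ∈ L, Δ ∈ m := fun Δ h => by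
    rw [hLdef] at h; exact (Multiset.mem_toList).mp h
  obtain ⟨Bs, hperm, hBne, hBconst, hBpair⟩ :=
    ArrAux.group_exists (ArrAux.key e c) L.length L le_rfl
  have hflatm : ∀ Δ ∈ (Bs.map Prod.snd).flatten, Δ ∈ m := fun Δ h =>
    hLm Δ (hperm.mem_iff.mp h)
  have hblockm : ∀ B ∈ Bs, ∀ Δ ∈ B.2, Δ ∈ m := by
    intro B hB Δ hΔ
    exact hflatm Δ (List.mem_flatten.mpr ⟨B.2, List.mem_map_of_mem (f := Prod.snd) hB, hΔ⟩)
  have hmapsnd : (Bs.map (fun p => (c + (p.1 : ZMod e), p.2))).map Prod.snd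
      = Bs.map Prod.snd := by
    rw [List.map_map]
    rfl
  refine ⟨Bs.map (fun p => (c + (p.1 : ZMod e), p.2)), ?_, ?_, ?_, ?_, ?_⟩
  · rw [hmapsnd, ← Multiset.coe_toList m]
    exact Multiset.coe_eq_coe.mpr hperm
  · intro P hP
    obtain ⟨B, hB, rfl⟩ := List.mem_map.mp hP
    exact hBne B hB
  · intro P hP Δ hΔ
    obtain ⟨B, hB, rfl⟩ := List.mem_map.mp hP
    simp only
    have hk : ArrAux.key e c Δ = B.1 := hBconst B hB Δ hΔ
    rw [← hk]
    unfold ArrAux.key ArrAux.kval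
    rw [ZMod.natCast_val, ZMod.cast_id]
    ring
  · rw [hmapsnd, List.pairwise_flatten]
    constructor
    · intro l hl
      obtain ⟨B, hB, rfl⟩ := List.mem_map.mp hl
      apply List.pairwise_of_forall_mem_list
      intro Δ hΔ Δ' hΔ'
      have h1 : ArrAux.key e c Δ = B.1 := hBconst B hB Δ hΔ
      have h2 : ArrAux.key e c Δ' = B.1 := hBconst B hB Δ' hΔ'
      have hΔm := hblockm B hB Δ hΔ
      have hΔ'm := hblockm B hB Δ' hΔ'
      exact ArrAux.not_mprec he2 c Δ Δ' (hc Δ hΔm) (hc Δ' hΔ'm)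
        (hpos Δ hΔm) (hpos Δ' hΔ'm) (by omega)
    · rw [List.pairwise_map]
      refine hBpair.imp_of_mem ?_
      intro B B' hB hB' hlt Δ hΔ Δ' hΔ'
      have h1 : ArrAux.key e c Δ = B.1 := hBconst B hB Δ hΔ
      have h2 : ArrAux.key e c Δ' = B'.1 := hBconst B' hB' Δ' hΔ'
      have hΔm := hblockm B hB Δ hΔ
      have hΔ'm := hblockm B' hB' Δ' hΔ'
      exact ArrAux.not_mprec he2 c Δ Δ' (hc Δ hΔm) (hc Δ' hΔ'm)
        (hpos Δ hΔm) (hpos Δ' hΔ'm) (by omega)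
  · rw [List.pairwise_map]
    refine hBpair.imp_of_mem ?_
    intro B B' hB hB' hlt
    intro Δ hΔ
    simp only
    have hΔm : Δ ∈ m := hblockm B' hB' Δ hΔ
    have hkΔ : ArrAux.key e c Δ = B'.1 := hBconst B' hB' Δ hΔ
    have hB1e : B.1 < e := by
      obtain ⟨Δ₁, hΔ₁⟩ := List.exists_mem_of_ne_nil _ (hBne B hB)
      have := hBconst B hB Δ₁ hΔ₁
      rw [← this]
      exact ArrAux.kval_lt he c _
    intro hmem
    obtain ⟨k, hk, heq⟩ := ArrAux.mem_mlist.mp hmem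
    have h1 : ArrAux.kval e c (c + (B.1 : ZMod e)) = B.1 := by
      unfold ArrAux.kval
      rw [add_sub_cancel_left, ZMod.val_cast_of_lt hB1e]
    have h2 : ArrAux.kval e c (Δ.1 + (k : ZMod e))
        = ArrAux.kval e c Δ.1 + k :=
      ArrAux.kval_mlist he2 c Δ.1 Δ.2 (hc Δ hΔm) k hk
    have h3 : ArrAux.key e c Δ = ArrAux.kval e c Δ.1 + (Δ.2 - 1) := by
      unfold ArrAux.key finalClass
      exact ArrAux.kval_mlist he2 c Δ.1 Δ.2 (hc Δ hΔm) (Δ.2 - 1)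
        (by have := hpos Δ hΔm; omega)
    rw [heq] at h1
    rw [h2] at h1
    have := hpos Δ hΔm
    omega
end

section
/- Let (Δ_1, …, Δ_r) be a finite sequence of Z-segments, write Δ_k = (a_k, b_k), and let i be an index such that Δ_i precedes Δ_{i+1} and a_{i+1} ≤ b_i. Then the sequence obtained by replacing the pair (Δ_i, Δ_{i+1}) by the pair ((a_{i+1}, b_i), (a_i, b_{i+1})) (the intersection followed by the union) has strictly fewer inversions than (Δ_1, …, Δ_r). (This is the second half of the inversion-decreasing step used in §5.7 of the paper, following Zelevinsky's Lemma 6.7.) -/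
/-- A Z-segment `(a, b)` precedes `(a', b')` if `a < a'`, `a' ≤ b + 1` and
`b < b'`. -/
def zprec (Δ Δ' : ℤ × ℤ) : Prop := Δ.1 < Δ'.1 ∧ Δ'.1 ≤ Δ.2 + 1 ∧ Δ.2 < Δ'.2

instance : ∀ Δ Δ' : ℤ × ℤ, Decidable (zprec Δ Δ') := fun _ _ => by
  unfold zprec; infer_instance

/-- The number of inversions of a finite sequence of Z-segments : pairs of
indices `i < j` such that the `i`-th segment precedes the `j`-th one. -/
def invCount (L : List (ℤ × ℤ)) : ℕ :=
  (Finset.univ.filter fun p : Fin L.length × Fin L.length =>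
      p.1 < p.2 ∧ zprec (L.get p.1) (L.get p.2)).card

lemma invCount_eq_sum (L : List (ℤ × ℤ)) :
    invCount L = ∑ p ∈ Finset.range L.length ×ˢ Finset.range L.length,
      (if p.1 < p.2 ∧ zprec (L.getD p.1 (0,0)) (L.getD p.2 (0,0)) then 1 else 0) := by
  classical
  rw [invCount, Finset.card_filter]
  refine Finset.sum_bij' (fun p _ => ((p.1 : ℕ), (p.2 : ℕ)))
    (fun p hp => (⟨p.1, Finset.mem_range.mp (Finset.mem_product.mp hp).1⟩,
                  ⟨p.2, Finset.mem_range.mp (Finset.mem_product.mp hp).2⟩))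
    (fun p _ => by simp [Finset.mem_product, p.1.2, p.2.2]) (fun p hp => Finset.mem_univ _)
    (fun p _ => rfl) (fun p hp => rfl) ?_
  intro p _
  have : (p.1 < p.2 ∧ zprec (L.get p.1) (L.get p.2)) ↔
      ((p.1 : ℕ) < (p.2 : ℕ) ∧ zprec (L.getD p.1 (0,0)) (L.getD p.2 (0,0))) := by
    rw [List.getD_eq_getElem _ _ p.1.2, List.getD_eq_getElem _ _ p.2.2]
    exact Iff.rfl
  exact if_congr this rfl rfl

/-- If `Δ_i = (a_i, b_i)` precedes `Δ_{i+1} = (a_{i+1}, b_{i+1})`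
and `a_{i+1} ≤ b_i`, then replacing `(Δ_i, Δ_{i+1})` by the pair
`((a_{i+1}, b_i), (a_i, b_{i+1}))` (intersection followed by union) strictly
decreases the number of inversions. -/
theorem invCount_intersect_union (L : List (ℤ × ℤ)) (hseg : ∀ Δ ∈ L, Δ.1 ≤ Δ.2)
    (i : ℕ) (hi : i + 1 < L.length)
    (h : zprec (L.get ⟨i, by omega⟩) (L.get ⟨i + 1, hi⟩))
    (hmeet : (L.get ⟨i + 1, hi⟩).1 ≤ (L.get ⟨i, by omega⟩).2) :
    invCount ((L.set i ((L.get ⟨i + 1, hi⟩).1, (L.get ⟨i, by omega⟩).2)).set (i + 1)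
        ((L.get ⟨i, by omega⟩).1, (L.get ⟨i + 1, hi⟩).2))
      < invCount L := by
  classical
  set Δ1 := L.get ⟨i, by omega⟩ with hΔ1
  set Δ2 := L.get ⟨i + 1, hi⟩ with hΔ2
  obtain ⟨h1, h2, h3⟩ : Δ1.1 < Δ2.1 ∧ Δ2.1 ≤ Δ1.2 + 1 ∧ Δ1.2 < Δ2.2 := h
  set n := L.length with hn
  set L' := (L.set i (Δ2.1, Δ1.2)).set (i + 1) (Δ1.1, Δ2.2) with hL'
  have hlen : L'.length = n := by simp [hL', hn]
  rw [invCount_eq_sum, invCount_eq_sum, hlen]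
  set s := Finset.range n ×ˢ Finset.range n with hs
  -- values of the two lists
  have gLi : L.getD i (0,0) = Δ1 := by
    rw [List.getD_eq_getElem _ _ (show i < L.length by omega)]; simp [hΔ1]
  have gLi1 : L.getD (i + 1) (0,0) = Δ2 := by
    rw [List.getD_eq_getElem _ _ (show i + 1 < L.length by omega)]; simp [hΔ2]
  have g'i : L'.getD i (0,0) = (Δ2.1, Δ1.2) := by
    rw [List.getD_eq_getElem?_getD, hL', List.getElem?_set_ne (by omega),
      List.getElem?_set_self (by omega)]
    rfl
  have g'i1 : L'.getD (i + 1) (0,0) = (Δ1.1, Δ2.2) := by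
    rw [List.getD_eq_getElem?_getD, hL',
      List.getElem?_set_self (by simpa using (by omega : i + 1 < n))]
    rfl
  have g'o : ∀ j, j ≠ i → j ≠ i + 1 → L'.getD j (0,0) = L.getD j (0,0) := by
    intro j e1 e2
    rw [List.getD_eq_getElem?_getD, hL', List.getElem?_set_ne (by omega),
      List.getElem?_set_ne (by omega), ← List.getD_eq_getElem?_getD]
  -- the swap
  set w : ℕ → ℕ := fun x => if x = i then i + 1 else if x = i + 1 then i else x with hw
  set σ : ℕ × ℕ → ℕ × ℕ := fun p => (w p.1, w p.2) with hσ
  have hwi : w i = i + 1 := by simp [hw]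
  have hwi1 : w (i + 1) = i := by simp [hw]
  have hwo : ∀ x, x ≠ i → x ≠ i + 1 → w x = x := by
    intro x e1 e2; simp [hw, e1, e2]
  have hww : ∀ x, w (w x) = x := by
    intro x; simp only [hw]; split_ifs <;> omega
  have hwlt : ∀ x, x < n → w x < n := by
    intro x hx; simp only [hw]; split_ifs <;> omega
  have hσs : ∀ p ∈ s, σ p ∈ s := by
    intro p hp
    rw [hs, Finset.mem_product, Finset.mem_range, Finset.mem_range] at hp ⊢
    exact ⟨hwlt _ hp.1, hwlt _ hp.2⟩
  have hσσ : ∀ p, σ (σ p) = p := by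
    intro p; simp only [hσ, hww]
  -- summands
  set F : ℕ × ℕ → ℕ := fun p =>
    if p.1 < p.2 ∧ zprec (L.getD p.1 (0,0)) (L.getD p.2 (0,0)) then 1 else 0 with hF
  set G : ℕ × ℕ → ℕ := fun p =>
    if p.1 < p.2 ∧ zprec (L'.getD p.1 (0,0)) (L'.getD p.2 (0,0)) then 1 else 0 with hG
  show ∑ p ∈ s, G p < ∑ p ∈ s, F p
  have hrei : ∀ H : ℕ × ℕ → ℕ, ∑ p ∈ s, H (σ p) = ∑ p ∈ s, H p := fun H =>
    Finset.sum_bij' (fun p _ => σ p) (fun p _ => σ p) hσs hσs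
      (fun p _ => hσσ p) (fun p _ => hσσ p) (fun p _ => rfl)
  have key : ∀ p ∈ s, G p + G (σ p) ≤ F p + F (σ p) := by
    rintro ⟨j, k⟩ hp
    rw [hs, Finset.mem_product, Finset.mem_range, Finset.mem_range] at hp
    obtain ⟨hj, hk⟩ := hp
    simp only [hσ, hG, hF]
    rcases eq_or_ne j i with rfl | ej1
    · rcases eq_or_ne k j with rfl | ek1
      · rw [hwi]; split_ifs <;> simp only [zprec] at * <;> omega
      · rcases eq_or_ne k (j + 1) with rfl | ek2
        · rw [hwi, hwi1, g'i, g'i1, gLi, gLi1]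
          split_ifs <;> simp only [zprec] at * <;> omega
        · rw [hwi, hwo k ek1 ek2, g'i, g'o k ek1 ek2, g'i1, gLi, gLi1]
          split_ifs <;> simp only [zprec] at * <;> omega
    · rcases eq_or_ne j (i + 1) with rfl | ej2
      · rcases eq_or_ne k i with rfl | ek1
        · rw [hwi, hwi1, g'i, g'i1, gLi, gLi1]
          split_ifs <;> simp only [zprec] at * <;> omega
        · rcases eq_or_ne k (i + 1) with rfl | ek2
          · rw [hwi1]; split_ifs <;> simp only [zprec] at * <;> omega
          · rw [hwi1, hwo k ek1 ek2, g'i, g'o k ek1 ek2, g'i1, gLi, gLi1]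
            split_ifs <;> simp only [zprec] at * <;> omega
      · rcases eq_or_ne k i with rfl | ek1
        · rw [hwi, hwo j ej1 ej2, g'i, g'o j ej1 ej2, g'i1, gLi, gLi1]
          split_ifs <;> simp only [zprec] at * <;> omega
        · rcases eq_or_ne k (i + 1) with rfl | ek2
          · rw [hwi1, hwo j ej1 ej2, g'i, g'o j ej1 ej2, g'i1, gLi, gLi1]
            split_ifs <;> simp only [zprec] at * <;> omega
          · rw [hwo j ej1 ej2, hwo k ek1 ek2, g'o j ej1 ej2, g'o k ek1 ek2]
  have hstrict : ∃ p ∈ s, G p + G (σ p) < F p + F (σ p) := by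
    refine ⟨(i, i + 1), ?_, ?_⟩
    · rw [hs, Finset.mem_product, Finset.mem_range, Finset.mem_range]
      constructor <;> omega
    · simp only [hσ, hG, hF]
      rw [hwi, hwi1, g'i, g'i1, gLi, gLi1]
      split_ifs <;> simp only [zprec] at * <;> omega
  have main : ∑ p ∈ s, (G p + G (σ p)) < ∑ p ∈ s, (F p + F (σ p)) :=
    Finset.sum_lt_sum key hstrict
  rw [Finset.sum_add_distrib, Finset.sum_add_distrib, hrei G, hrei F] at main
  omega
end
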